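/- Let B be a Bratteli diagram whose tail equivalence relation is transitive, meaning some path e* has dense tail equivalence class in X_B. Then the metamour function is uniformly bounded at level 0: there exists ϖ ∈ ℕ such that for any two vertices v, w ∈ V_0 there exist paths p, q of length at most ϖ from v and w respectively to a common vertex, i.e., Δ_B^+(0) = max_{v,w ∈ V_0} Δ_B^0(v,w) < ∞. -/

import Mathlib

open Classical Filter Topology MeasureTheory

structure Bratteli where
  V : ℕ → Type
  E : ℕ → Type
  finV : ∀ k, Fintype (V k)
  finE : ∀ k, Fintype (E k)
  neV : ∀ k, Nonempty (V k)
  src : ∀ k, E k → V k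
  rng : ∀ k, E k → V (k + 1)
  srcSurj : ∀ k, Function.Surjective (src k)
  rngSurj : ∀ k, Function.Surjective (rng k)

attribute [instance] Bratteli.finV Bratteli.finE Bratteli.neV

namespace Bratteli

variable {B : Bratteli}

/-- An infinite path in a Bratteli diagram, starting at level 0. -/
structure Path (B : Bratteli) where
  edges : ∀ k, B.E k
  compat : ∀ k, B.rng k (edges k) = B.src (k + 1) (edges (k + 1))

/-- Tail equivalence: agreement in all but finitely many coordinates. -/
def TailEquiv (x y : B.Path) : Prop := ∃ N, ∀ k, N ≤ k → x.edges k = y.edges k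

def tailClass (x : B.Path) : Set B.Path := {y | TailEquiv x y}

/-- Cylinder-set (product of discrete) topology on the path space. -/
instance (B : Bratteli) : TopologicalSpace B.Path :=
  TopologicalSpace.induced Path.edges (@Pi.topologicalSpace ℕ (fun k => B.E k) (fun _ => ⊥))

/-- A finite path from level 0 through level n. -/
structure FinPath (B : Bratteli) (n : ℕ) where
  edges : ∀ k, k < n → B.E k
  compat : ∀ k (h : k + 1 < n),
    B.rng k (edges k (Nat.lt_of_succ_lt h)) = B.src (k + 1) (edges (k + 1) h)

def FinPath.startV {n : ℕ} (p : B.FinPath (n + 1)) : B.V 0 :=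
  B.src 0 (p.edges 0 (Nat.succ_pos n))

def FinPath.endV {n : ℕ} (p : B.FinPath (n + 1)) : B.V (n + 1) :=
  B.rng n (p.edges n (Nat.lt_succ_self n))

/-- A finite path from level a of length n. -/
structure SegPath (B : Bratteli) (a n : ℕ) where
  edges : ∀ i, i < n → B.E (a + i)
  compat : ∀ i (h : i + 1 < n),
    B.rng (a + i) (edges i (Nat.lt_of_succ_lt h)) = B.src (a + (i + 1)) (edges (i + 1) h)

def SegPath.startV {a n : ℕ} (p : B.SegPath a (n + 1)) : B.V a :=
  B.src a (p.edges 0 (Nat.succ_pos n))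

def SegPath.endV {a n : ℕ} (p : B.SegPath a (n + 1)) : B.V (a + n + 1) :=
  B.rng (a + n) (p.edges n (Nat.lt_succ_self n))

/-- A weight function: nonnegative weights on level-0 vertices and on edges. -/
structure WeightFn (B : Bratteli) where
  w0 : B.V 0 → ℝ
  we : ∀ k, B.E k → ℝ
  nonneg0 : ∀ v, 0 ≤ w0 v
  nonnegE : ∀ k e, 0 ≤ we k e

/-- The product w(s(e₁))·∏ w(eᵢ) along a finite path. -/
def WeightFn.finProd {n : ℕ} (w : B.WeightFn) (p : B.FinPath (n + 1)) : ℝ :=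
  w.w0 p.startV * ∏ i : Fin (n + 1), w.we i (p.edges i i.isLt)

/-- The partial product along an infinite path. -/
def WeightFn.prodPath (w : B.WeightFn) (x : B.Path) (n : ℕ) : ℝ :=
  w.w0 (B.src 0 (x.edges 0)) * ∏ i ∈ Finset.range n, w.we i (x.edges i)

/-- The weight-function axioms (i) path-independence, (ii) unit outgoing mass,
(iii) decay along non-periodic paths. -/
structure IsWeight (w : B.WeightFn) : Prop where
  pathIndep : ∀ n (p q : B.FinPath (n + 1)), p.endV = q.endV → w.finProd p = w.finProd q
  outSum : ∀ k (v : B.V k), (∑ e : B.E k, if B.src k e = v then w.we k e else 0) = 1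
  decay : ∀ x : B.Path, ¬ (tailClass x).Finite →
    Filter.Tendsto (fun n => w.prodPath x n) Filter.atTop (nhds 0)

/-- Auxiliary: recursively choose edges starting at a given level-0 vertex. -/
noncomputable def extendEdges (B : Bratteli) (v : B.V 0) : ∀ k, B.E k
  | 0 => (B.srcSurj 0 v).choose
  | k + 1 => (B.srcSurj (k + 1) (B.rng k (extendEdges B v k))).choose

lemma extendEdges_src0 (B : Bratteli) (v : B.V 0) :
    B.src 0 (extendEdges B v 0) = v := (B.srcSurj 0 v).choose_spec

lemma extendEdges_compat (B : Bratteli) (v : B.V 0) (k : ℕ) :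
    B.rng k (extendEdges B v k) = B.src (k + 1) (extendEdges B v (k + 1)) :=
  ((B.srcSurj (k + 1) (B.rng k (extendEdges B v k))).choose_spec).symm

/-- An infinite path starting at a prescribed level-0 vertex. -/
noncomputable def pathFrom (B : Bratteli) (v : B.V 0) : B.Path :=
  ⟨extendEdges B v, extendEdges_compat B v⟩

/-- Truncation of an infinite path to a finite path. -/
def Path.truncate (x : B.Path) (n : ℕ) : B.FinPath n :=
  ⟨fun k _ => x.edges k, fun k _ => x.compat k⟩

lemma cylinder_open (B : Bratteli) (e0 : B.E 0) :
    IsOpen {y : B.Path | y.edges 0 = e0} := by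
  letI : ∀ k, TopologicalSpace (B.E k) := fun _ => ⊥
  have hc : Continuous (fun y : B.Path => y.edges 0) := by
    exact (continuous_apply (A := fun k => B.E k) 0).comp continuous_induced_dom
  have : DiscreteTopology (B.E 0) := ⟨rfl⟩
  exact (isOpen_discrete {e0}).preimage hc

/-- if some tail equivalence class is dense in X_B (transitivity), then the
metamour function is uniformly bounded at level 0: there is ϖ such that any two level-0
vertices are connected by paths of length at most ϖ to a common vertex. -/
theorem transitive_implies_metamour_bounded (B : Bratteli)
    (htrans : ∃ x : B.Path, Dense (tailClass x)) :
    ∃ ϖ : ℕ, ∀ v w : B.V 0, ∃ n ≤ ϖ, ∃ p q : B.FinPath (n + 1),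
      p.startV = v ∧ q.startV = w ∧ p.endV = q.endV := by
  obtain ⟨x, hx⟩ := htrans
  have key : ∀ v : B.V 0, ∃ y ∈ tailClass x, B.src 0 (y.edges 0) = v := by
    intro v
    have hne : ({y : B.Path | y.edges 0 = (pathFrom B v).edges 0}).Nonempty :=
      ⟨pathFrom B v, rfl⟩
    obtain ⟨y, hy1, hy2⟩ := hx.exists_mem_open (cylinder_open B _) hne
    refine ⟨y, hy1, ?_⟩
    rw [hy2]
    exact extendEdges_src0 B v
  have main : ∀ v w : B.V 0, ∃ n, ∃ p q : B.FinPath (n + 1),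
      p.startV = v ∧ q.startV = w ∧ p.endV = q.endV := by
    intro v w
    obtain ⟨y, ⟨Ny, hy⟩, hyv⟩ := key v
    obtain ⟨z, ⟨Nz, hz⟩, hzw⟩ := key w
    refine ⟨max Ny Nz, y.truncate _, z.truncate _, hyv, hzw, ?_⟩
    show B.rng _ (y.edges _) = B.rng _ (z.edges _)
    rw [← hy _ (le_max_left _ _), ← hz _ (le_max_right _ _)]
  choose f hf using main
  refine ⟨Finset.univ.sup fun v => Finset.univ.sup (f v), fun v w =>
    ⟨f v w, ?_, hf v w⟩⟩
  exact le_trans (Finset.le_sup (Finset.mem_univ w))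
    (Finset.le_sup (f := fun v => Finset.univ.sup (f v)) (Finset.mem_univ v))

end Bratteli
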